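/- Let S be a semigroup that satisfies Property (C₃), and let u be a word in which each variable forms exactly one island, i.e. u = x₁^{p₁}x₂^{p₂}⋯x_r^{p_r} for pairwise distinct variables x₁,…,x_r and positive exponents p₁,…,p_r. Then for every word v, if S satisfies u ≈ v then v is of the same type as u. -/

import Mathlib

/-- The alphabet of variables. -/
abbrev Var := ℕ

/-- Words are (possibly empty) lists of variables; elements of the free
semigroup `𝔄⁺` are the nonempty ones. -/
abbrev Word := List Var

/-- Two words are of the same type if they agree after collapsing each
maximal constant run (island) to a single letter. -/
def sameType (u v : Word) : Prop :=
  u.destutter (· ≠ ·) = v.destutter (· ≠ ·)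

/-- The number of islands of a word. -/
def height (u : Word) : ℕ := (u.destutter (· ≠ ·)).length

/-- The set of variables occurring in a word. -/
def con (u : Word) : Set Var := {x | x ∈ u}

/-- `del u X` is the word obtained from `u` by deleting all occurrences of all
variables not in the list `X`; i.e. `u(x₁,…,x_k)` for `X = [x₁,…,x_k]`. -/
def del (u : Word) (X : List Var) : Word := u.filter (· ∈ X)

/-- The set of linear variables of `u` (occurring exactly once). -/
def lin (u : Word) : Set Var := {x | u.count x = 1}

/-- The set of non-linear variables of `u` (occurring at least twice). -/
def nonlin (u : Word) : Set Var := {x | 2 ≤ u.count x}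

/-- The set of variables occurring exactly twice in `u`. -/
def con2 (u : Word) : Set Var := {x | u.count x = 2}

/-- The set of variables occurring at least three times in `u`. -/
def conGt2 (u : Word) : Set Var := {x | 3 ≤ u.count x}

/-- Applying a substitution `Θ : 𝔄 → 𝔄⁺` to a word, as the extension of `Θ`
to a homomorphism. -/
def subst (Θ : Var → Word) (u : Word) : Word := u.flatMap Θ

/-- `w` is a power (with positive exponent) of the variable `c`. -/
def isPowerOf (w : Word) (c : Var) : Prop := ∃ k : ℕ, 0 < k ∧ w = List.replicate k c

/-- A monoid `M` satisfies the identity `u ≈ v` if every monoid homomorphism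
from the free monoid `𝔄*` to `M` (equivalently, the extension of every map
`φ : 𝔄 → M`) identifies `u` and `v`. -/
def MSat (M : Type) [Monoid M] (u v : Word) : Prop :=
  ∀ φ : Var → M, (u.map φ).prod = (v.map φ).prod

/-- Evaluation of a nonempty word in a semigroup under `φ : 𝔄 → S`
(the empty word evaluates to `none`). -/
def evalS {S : Type} [Semigroup S] (φ : Var → S) : Word → Option S
  | [] => none
  | a :: t => some ((t.map φ).foldl (· * ·) (φ a))

/-- A semigroup `S` satisfies the identity `u ≈ v` between nonempty words if
every semigroup homomorphism from the free semigroup `𝔄⁺` to `S` identifies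
`u` and `v`. -/
def SSat (S : Type) [Semigroup S] (u v : Word) : Prop :=
  ∀ φ : Var → S, evalS φ u = evalS φ v

/-- Property (C_ℓ) for a monoid: every word in two variables of height at most
`ℓ` can form an identity of `M` only with a word of the same type. -/
def MPropC (M : Type) [Monoid M] (ℓ : ℕ) : Prop :=
  ∀ x y : Var, x ≠ y → ∀ u : Word, u ≠ [] → (∀ c ∈ u, c = x ∨ c = y) →
    height u ≤ ℓ → ∀ v : Word, MSat M u v → sameType u v

/-- Property (C_ℓ) for a semigroup. -/
def SPropC (S : Type) [Semigroup S] (ℓ : ℕ) : Prop :=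
  ∀ x y : Var, x ≠ y → ∀ u : Word, u ≠ [] → (∀ c ∈ u, c = x ∨ c = y) →
    height u ≤ ℓ → ∀ v : Word, SSat S u v → sameType u v

/-- A monoid is finitely based if some finite set of identities it satisfies
entails all its identities (in every monoid). -/
def MonoidFB (M : Type) [Monoid M] : Prop :=
  ∃ Sig : Finset (Word × Word),
    (∀ p ∈ Sig, MSat M p.1 p.2) ∧
    ∀ (N : Type) [Monoid N], (∀ p ∈ Sig, MSat N p.1 p.2) →
      ∀ u v : Word, MSat M u v → MSat N u v

/-- A semigroup is finitely based if some finite set of identities (between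
nonempty words) it satisfies entails all its identities (in every semigroup). -/
def SemigroupFB (S : Type) [Semigroup S] : Prop :=
  ∃ Sig : Finset (Word × Word),
    (∀ p ∈ Sig, p.1 ≠ [] ∧ p.2 ≠ [] ∧ SSat S p.1 p.2) ∧
    ∀ (T : Type) [Semigroup T], (∀ p ∈ Sig, SSat T p.1 p.2) →
      ∀ u v : Word, u ≠ [] → v ≠ [] → SSat S u v → SSat T u v

/-- `B` is a block of `u` occurring as `u = p ++ B ++ s`: it contains no linear
variables of `u` and is maximal with this property. -/
def IsBlockAt (u p B s : Word) : Prop :=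
  u = p ++ B ++ s ∧ (∀ c ∈ B, c ∉ lin u) ∧
  (∀ c : Var, p.getLast? = some c → c ∈ lin u) ∧
  (∀ c : Var, s.head? = some c → c ∈ lin u)

/-- The word `Uₙ = (x₁⋯xₙ)(xₙ⋯x₁)(x₁⋯xₙ)`. -/
def Uword (n : ℕ) (x : Fin n → Var) : Word :=
  List.ofFn x ++ (List.ofFn x).reverse ++ List.ofFn x

/-- The word `Vₙ = (x₁⋯xₙ)(x₁²x₂²⋯xₙ²)`. -/
def Vword (n : ℕ) (x : Fin n → Var) : Word :=
  List.ofFn x ++ (List.ofFn x).flatMap (fun c => [c, c])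

section DestutterHelpers

open List

private lemma hd' : ∀ (l : List Var) (a : Var), ∃ t, l.destutter' (· ≠ ·) a = a :: t := by
  intro l
  induction l with
  | nil => intro a; exact ⟨[], rfl⟩
  | cons b t ih =>
    intro a
    by_cases h : a ≠ b
    · exact ⟨_, destutter'_cons_pos _ h⟩
    · rw [destutter'_cons_neg _ h]; exact ih a

private lemma Kmap (f : Var → Var) :
    ∀ (l : List Var) (a : Var),
      (((l.destutter' (· ≠ ·) a).tail).map f).destutter' (· ≠ ·) (f a)
        = (l.map f).destutter' (· ≠ ·) (f a) := by
  intro l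
  induction l with
  | nil => intro a; simp [destutter'_nil]
  | cons b t ih =>
    intro a
    rw [List.map_cons]
    by_cases hab : a ≠ b
    · rw [destutter'_cons_pos _ hab]
      obtain ⟨tb, htb⟩ := hd' t b
      rw [List.tail_cons, htb, List.map_cons]
      have ihb := ih b
      rw [htb, List.tail_cons] at ihb
      by_cases hfab : f a ≠ f b
      · rw [destutter'_cons_pos _ hfab, destutter'_cons_pos _ hfab, ihb]
      · push_neg at hfab
        rw [destutter'_cons_neg _ (by simp [hfab]), destutter'_cons_neg _ (by simp [hfab])]
        rw [hfab, ihb]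
    · push_neg at hab
      subst hab
      rw [destutter'_cons_neg _ (by simp), destutter'_cons_neg _ (by simp)]
      exact ih a

private lemma destutter_map (f : Var → Var) (l : List Var) :
    (l.map f).destutter (· ≠ ·) = ((l.destutter (· ≠ ·)).map f).destutter (· ≠ ·) := by
  cases l with
  | nil => rfl
  | cons a t =>
    rw [List.map_cons, destutter_cons', destutter_cons']
    obtain ⟨tt, htt⟩ := hd' t a
    have h := Kmap f t a
    rw [htt] at h ⊢
    rw [List.tail_cons] at h
    rw [List.map_cons, destutter_cons', h]

private lemma count_destutter' (f : Var → Var) (c : Var) (hf : ∀ e, f e = c ↔ e = c) :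
    ∀ (l : List Var) (a : Var),
      ((l.map f).destutter' (· ≠ ·) (f a)).count c = (l.destutter' (· ≠ ·) a).count c := by
  intro l
  induction l with
  | nil =>
    intro a
    simp only [List.map_nil, destutter'_nil]
    simp [List.count_singleton', hf]
  | cons b t ih =>
    intro a
    rw [List.map_cons]
    by_cases hab : a ≠ b
    · rw [destutter'_cons_pos _ hab]
      by_cases hfab : f a ≠ f b
      · rw [destutter'_cons_pos _ hfab]
        simp only [List.count_cons, ih b]
        congr 1
        simp [hf]
      · push_neg at hfab
        have hfac : f a ≠ c := by
          intro hcc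
          have ha : a = c := (hf a).mp hcc
          have hb : b = c := (hf b).mp (hfab ▸ hcc)
          exact hab (ha.trans hb.symm)
        have hac : a ≠ c := fun hcc => hfac ((hf a).mpr hcc)
        rw [destutter'_cons_neg _ (by simp [hfab])]
        rw [hfab, ih b]
        simp [List.count_cons, hac]
    · push_neg at hab
      subst hab
      rw [destutter'_cons_neg _ (by simp), destutter'_cons_neg _ (by simp)]
      exact ih a

private lemma count_destutter_map (f : Var → Var) (c : Var) (hf : ∀ e, f e = c ↔ e = c)
    (l : List Var) :
    ((l.map f).destutter (· ≠ ·)).count c = (l.destutter (· ≠ ·)).count c := by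
  cases l with
  | nil => rfl
  | cons a t =>
    rw [List.map_cons, destutter_cons', destutter_cons']
    exact count_destutter' f c hf t a

private lemma destutter'_rep0 (a : Var) (l : List Var) :
    ∀ k, ((List.replicate k a ++ l).destutter' (· ≠ ·) a) = l.destutter' (· ≠ ·) a := by
  intro k
  induction k with
  | zero => rfl
  | succ k ih =>
    rw [List.replicate_succ, List.cons_append, destutter'_cons_neg _ (by simp)]
    exact ih

private lemma destutter_flat' (rep : ℕ × Var → List Var)
    (hrep : ∀ q, rep q = List.replicate q.1 q.2) :
    ∀ (L : List (ℕ × Var)) (a : Var), (∀ q ∈ L, 0 < q.1) →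
      (a :: L.map Prod.snd).Chain' (· ≠ ·) →
      ((L.flatMap rep).destutter' (· ≠ ·) a) = a :: L.map Prod.snd := by
  intro L
  induction L with
  | nil => intro a _ _; simp [destutter'_nil]
  | cons q L ih =>
    intro a hp hc
    obtain ⟨k, b⟩ := q
    have hk : 0 < k := hp _ (List.mem_cons_self)
    obtain ⟨k', rfl⟩ : ∃ k', k = k' + 1 := ⟨k - 1, by omega⟩
    rw [List.flatMap_cons, hrep]
    simp only [List.replicate_succ, List.cons_append]
    have hab : a ≠ b := (List.isChain_cons_cons.mp (by simpa [List.Chain'] using hc)).1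
    rw [destutter'_cons_pos _ hab, destutter'_rep0]
    have := ih b (fun q hq => hp q (List.mem_cons_of_mem _ hq))
      (by simpa [List.Chain'] using (List.isChain_cons_cons.mp (by simpa [List.Chain'] using hc)).2)
    rw [this]
    simp

private lemma destutter_flat (L : List (ℕ × Var)) (hp : ∀ q ∈ L, 0 < q.1)
    (hc : (L.map Prod.snd).Chain' (· ≠ ·)) :
    ((L.flatMap fun q => List.replicate q.1 q.2).destutter (· ≠ ·)) = L.map Prod.snd := by
  cases L with
  | nil => rfl
  | cons q L =>
    obtain ⟨k, a⟩ := q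
    have hk : 0 < k := hp _ (List.mem_cons_self)
    obtain ⟨k', rfl⟩ : ∃ k', k = k' + 1 := ⟨k - 1, by omega⟩
    rw [List.flatMap_cons]
    simp only [List.replicate_succ, List.cons_append, destutter_cons']
    rw [destutter'_rep0]
    exact destutter_flat' _ (fun _ => rfl) L a (fun q hq => hp q (List.mem_cons_of_mem _ hq))
      (by simpa using hc)

private lemma mem_destutter'_of_mem : ∀ (l : List Var) (b a : Var), a ∈ b :: l →
    a ∈ l.destutter' (· ≠ ·) b := by
  intro l
  induction l with
  | nil => intro b a ha; simpa [destutter'_nil] using ha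
  | cons c t ih =>
    intro b a ha
    by_cases hbc : b ≠ c
    · rw [destutter'_cons_pos _ hbc]
      rcases List.mem_cons.mp ha with rfl | ha'
      · exact List.mem_cons_self
      · exact List.mem_cons_of_mem _ (ih c a ha')
    · push_neg at hbc
      subst hbc
      rw [destutter'_cons_neg _ (by simp)]
      refine ih b a ?_
      rcases List.mem_cons.mp ha with rfl | ha'
      · exact List.mem_cons_self
      · rcases List.mem_cons.mp ha' with rfl | ha''
        · exact List.mem_cons_self
        · exact List.mem_cons_of_mem _ ha''

private lemma mem_destutter_of_mem {l : List Var} {a : Var} (h : a ∈ l) :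
    a ∈ l.destutter (· ≠ ·) := by
  cases l with
  | nil => simp at h
  | cons b t => rw [destutter_cons']; exact mem_destutter'_of_mem t b a h

private lemma len_le_three {c y : Var} {W : List Var} (hch : W.Chain' (· ≠ ·))
    (hmem : ∀ e ∈ W, e = c ∨ e = y) (hcnt : W.count c ≤ 1) : W.length ≤ 3 := by
  match W with
  | [] => simp
  | [_] => simp
  | [_, _] => simp
  | [_, _, _] => simp
  | a :: b :: d :: e :: t =>
    exfalso
    have h1 : a ≠ b := (List.isChain_cons_cons.mp hch).1
    have h2 : d ≠ e := (List.isChain_cons_cons.mp (List.isChain_cons_cons.mp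
      (List.isChain_cons_cons.mp hch).2).2).1
    have ha := hmem a (by simp)
    have hb := hmem b (by simp)
    have hd := hmem d (by simp)
    have he := hmem e (by simp)
    have h3 : 2 ≤ (a :: b :: d :: e :: t).count c := by
      simp only [List.count_cons]
      rcases ha with rfl | rfl <;> rcases hb with rfl | rfl <;>
        rcases hd with rfl | rfl <;> rcases he with rfl | rfl <;> simp_all <;> omega
    omega

private lemma zreg {y z : Var} (hyz : y ≠ z) : ∀ (t : List Var), (∀ e ∈ t, e = y ∨ e = z) →
    t.destutter' (· ≠ ·) z = [z] → ∃ b, t = List.replicate b z := by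
  intro t
  induction t with
  | nil => exact fun _ _ => ⟨0, rfl⟩
  | cons e t' ih =>
    intro hm hd
    rcases hm e (by simp) with he | he <;> subst he
    · rw [destutter'_cons_pos _ (Ne.symm hyz)] at hd
      simp only [List.cons.injEq] at hd
      exact absurd hd.2 (destutter'_ne_nil _ _)
    · rw [destutter'_cons_neg _ (by simp)] at hd
      obtain ⟨b, rfl⟩ := ih (fun e he => hm e (List.mem_cons_of_mem _ he)) hd
      exact ⟨b + 1, by rw [List.replicate_succ]⟩

private lemma ordaux {y z : Var} (hyz : y ≠ z) : ∀ (t : List Var),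
    (∀ e ∈ t, e = y ∨ e = z) → t.destutter' (· ≠ ·) y = [y, z] →
    ∃ a b, y :: t = List.replicate (a + 1) y ++ List.replicate b z := by
  intro t
  induction t with
  | nil => intro _ h; simp [destutter'_nil] at h
  | cons e t' ih =>
    intro hm hd
    rcases hm e (by simp) with he | he <;> subst he
    · rw [destutter'_cons_neg _ (by simp)] at hd
      obtain ⟨a, b, hab⟩ := ih (fun e he => hm e (List.mem_cons_of_mem _ he)) hd
      exact ⟨a + 1, b, by rw [List.replicate_succ, List.cons_append, hab]⟩
    · rw [destutter'_cons_pos _ hyz] at hd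
      simp only [List.cons.injEq, true_and] at hd
      obtain ⟨b, rfl⟩ := zreg hyz t' (fun e he => hm e (List.mem_cons_of_mem _ he)) hd
      exact ⟨0, b + 1, by simp [List.replicate_succ]⟩

private lemma ordc {y z : Var} (hyz : y ≠ z) {m : List Var}
    (hm : ∀ e ∈ m, e = y ∨ e = z) (hd : m.destutter (· ≠ ·) = [y, z]) :
    ∃ a b, m = List.replicate (a + 1) y ++ List.replicate b z := by
  cases m with
  | nil => simp [destutter_nil] at hd
  | cons e t =>
    rw [destutter_cons'] at hd
    obtain ⟨tt, htt⟩ := hd' t e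
    rw [htt] at hd
    simp only [List.cons.injEq] at hd
    obtain ⟨rfl, rfl⟩ := hd
    exact ordaux hyz t (fun e he => hm e (List.mem_cons_of_mem _ he)) htt

private lemma y_before_z {y z : Var} (hyz : y ≠ z) {m : List Var} {a b k1 k2 : ℕ}
    (hm : m = List.replicate a y ++ List.replicate b z) (h1 : k1 < m.length)
    (h2 : k2 < m.length) (hy : m[k1] = y) (hz : m[k2] = z) : k1 < k2 := by
  subst hm
  simp only [List.length_append, List.length_replicate] at h1 h2
  by_contra hle
  push_neg at hle
  have hk2 : a ≤ k2 := by
    by_contra hcc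
    push_neg at hcc
    rw [List.getElem_append_left (by simpa using hcc)] at hz
    simp at hz
    exact hyz hz
  have hk1 : a ≤ k1 := le_trans hk2 hle
  rw [List.getElem_append_right (by simpa using hk1)] at hy
  simp at hy
  exact hyz hy.symm

private lemma ofFn_threshold {r : ℕ} (g : Fin r → Var) (y z : Var) (i : ℕ)
    (hg : ∀ j : Fin r, g j = if (j : ℕ) ≤ i then y else z) (hir : i < r) :
    List.ofFn g = List.replicate (i + 1) y ++ List.replicate (r - 1 - i) z := by
  apply List.ext_getElem
  · simp; omega
  · intro k hk1 hk2
    rw [List.getElem_ofFn, hg]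
    by_cases hki : k ≤ i
    · rw [List.getElem_append_left (by simp; omega)]
      simp [hki]
    · rw [List.getElem_append_right (by simp; omega)]
      simp [hki]

private lemma destutter_yz {y z : Var} (hyz : y ≠ z) {A B : ℕ} (hA : 0 < A) (hB : 0 < B) :
    (List.replicate A y ++ List.replicate B z).destutter (· ≠ ·) = [y, z] := by
  obtain ⟨A', rfl⟩ : ∃ A', A = A' + 1 := ⟨A - 1, by omega⟩
  obtain ⟨B', rfl⟩ : ∃ B', B = B' + 1 := ⟨B - 1, by omega⟩
  rw [List.replicate_succ, List.cons_append, destutter_cons', destutter'_rep0]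
  rw [List.replicate_succ, destutter'_cons_pos _ hyz]
  have hrep : (List.replicate B' z).destutter' (· ≠ ·) z = [z] := by
    have := destutter'_rep0 z [] B'
    rwa [List.append_nil] at this
  rw [hrep]

private lemma le_foldr_max : ∀ (l : List ℕ) (c : ℕ), c ∈ l → c ≤ l.foldr max 0 := by
  intro l
  induction l with
  | nil => simp
  | cons a t ih =>
    intro c hc
    rcases List.mem_cons.mp hc with rfl | hc'
    · simp [List.foldr_cons]
    · exact le_trans (ih c hc') (by simp [List.foldr_cons])

private lemma evalS_map {S : Type} [Semigroup S] (φ : Var → S) (f : Var → Var) (w : Word) :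
    evalS φ (w.map f) = evalS (φ ∘ f) w := by
  cases w with
  | nil => rfl
  | cons a t => simp [evalS, List.map_map]

private lemma SSat_map {S : Type} [Semigroup S] {u v : Word} (hsat : SSat S u v)
    (f : Var → Var) : SSat S (u.map f) (v.map f) := by
  intro φ
  rw [evalS_map, evalS_map]
  exact hsat (φ ∘ f)

end DestutterHelpers

/-- a word in which every variable forms exactly one island can
form an identity of a semigroup with Property (C₃) only with a word of the
same type. -/
theorem stmt12 (S : Type) [Semigroup S] (hC3 : SPropC S 3) (u : Word)
    (h : ∃ (r : ℕ) (x : Fin r → Var) (p : Fin r → ℕ), 0 < r ∧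
      Function.Injective x ∧ (∀ i, 0 < p i) ∧
      u = (List.ofFn fun i => List.replicate (p i) (x i)).flatten) :
    ∀ v : Word, SSat S u v → sameType u v := by
  obtain ⟨r, x, p, hr, hinj, hp, hu⟩ := h
  set X : Word := List.ofFn x with hX
  have hchainX : X.Chain' (· ≠ ·) := (List.nodup_ofFn.mpr hinj).isChain
  have hnodupX : X.Nodup := List.nodup_ofFn.mpr hinj
  have hLu : u = (List.ofFn fun i => ((p i, x i) : ℕ × Var)).flatMap
      (fun q => List.replicate q.1 q.2) := by
    rw [List.flatMap_def, List.map_ofFn, hu]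
    rfl
  have hmapsnd : (List.ofFn fun i => ((p i, x i) : ℕ × Var)).map Prod.snd = X := by
    rw [List.map_ofFn]; rfl
  have hdu : u.destutter (· ≠ ·) = X := by
    rw [hLu, destutter_flat _ ?_ ?_, hmapsnd]
    · intro q hq
      rw [List.mem_ofFn] at hq
      obtain ⟨i, rfl⟩ := hq
      exact hp i
    · rw [hmapsnd]; exact hchainX
  have hXlen : X.length = r := by simp [hX]
  have hXne : X ≠ [] := by
    intro hh
    rw [hh] at hXlen
    simp at hXlen
    omega
  have hune : u ≠ [] := by
    intro hh
    rw [hh, List.destutter_nil] at hdu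
    exact hXne hdu.symm
  have hmemu : ∀ c, c ∈ u ↔ ∃ i, c = x i := by
    intro c
    rw [hu]
    constructor
    · intro hc
      obtain ⟨l, hl, hcl⟩ := List.mem_flatten.mp hc
      rw [List.mem_ofFn] at hl
      obtain ⟨i, rfl⟩ := hl
      exact ⟨i, (List.eq_of_mem_replicate hcl)⟩
    · rintro ⟨i, rfl⟩
      refine List.mem_flatten.mpr ⟨List.replicate (p i) (x i), List.mem_ofFn.mpr ⟨i, rfl⟩,
        List.mem_replicate.mpr ⟨?_, rfl⟩⟩
      have := hp i; omega
  rcases isEmpty_or_nonempty S with hS | hS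
  · exfalso
    have h01 : SSat S [0] [1] := fun φ => (hS.false (φ 0)).elim
    have := hC3 0 1 (by norm_num) [0] (by simp)
      (fun c hc => Or.inl (by simpa using hc)) (by simp [height]) [1] h01
    simp [sameType] at this
  intro v hsat
  have hvne : v ≠ [] := by
    intro hv
    obtain ⟨s⟩ := hS
    have h1 := hsat (fun _ => s)
    rw [hv] at h1
    cases hu2 : u with
    | nil => exact hune hu2
    | cons a t => rw [hu2] at h1; simp [evalS] at h1
  obtain ⟨N, hfreshu, hfreshv⟩ : ∃ N, (∀ c ∈ u, c < N) ∧ ∀ c ∈ v, c < N :=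
    ⟨(u ++ v).foldr max 0 + 1,
     fun c hc => lt_of_le_of_lt (le_foldr_max _ c (List.mem_append_left _ hc)) (Nat.lt_succ_self _),
     fun c hc => lt_of_le_of_lt (le_foldr_max _ c (List.mem_append_right _ hc)) (Nat.lt_succ_self _)⟩
  have hyz : N ≠ N + 1 := Nat.ne_of_lt (Nat.lt_succ_self N)
  have hxN : ∀ i, x i ≠ N := fun i hh =>
    absurd (hh ▸ hfreshu (x i) ((hmemu _).mpr ⟨i, rfl⟩)) (lt_irrefl N)
  -- Step A : every letter of v is some x i
  have hvsub : ∀ c ∈ v, ∃ i, c = x i := by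
    intro w hw
    by_contra hno
    push_neg at hno
    have hwu : w ∉ u := fun hh => by
      obtain ⟨i, hi⟩ := (hmemu w).mp hh; exact hno i hi
    have hwy : w ≠ N := Nat.ne_of_lt (hfreshv w hw)
    set f : Var → Var := fun c => if c = w then w else N with hf
    have hfiff : ∀ e, f e = w ↔ e = w := by
      intro e
      by_cases he : e = w <;> simp [hf, he, Ne.symm hwy]
    have hwX : w ∉ X := fun hh => by
      rw [hX, List.mem_ofFn] at hh
      obtain ⟨i, hi⟩ := hh
      exact hno i hi.symm
    have hcnt : ((u.map f).destutter (· ≠ ·)).count w ≤ 1 := by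
      rw [count_destutter_map f w hfiff, hdu, List.count_eq_zero_of_not_mem hwX]
      omega
    have hletters : ∀ c ∈ u.map f, c = w ∨ c = N := by
      intro c hc
      obtain ⟨e, _, rfl⟩ := List.mem_map.mp hc
      by_cases he : e = w
      · left; simp [hf, he]
      · right; simp [hf, he]
    have hht : height (u.map f) ≤ 3 :=
      len_le_three (List.isChain_destutter _ _)
        (fun e he => hletters e ((List.destutter_sublist _ _).subset he)) hcnt
    have hsame : (u.map f).destutter (· ≠ ·) = (v.map f).destutter (· ≠ ·) :=
      hC3 w N hwy (u.map f) (by simp [hune]) hletters hht (v.map f) (SSat_map hsat f)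
    have hwin : w ∈ (v.map f).destutter (· ≠ ·) :=
      mem_destutter_of_mem (List.mem_map.mpr ⟨w, hw, by simp [hf]⟩)
    rw [← hsame] at hwin
    have hwin2 : w ∈ u.map f := (List.destutter_sublist _ _).subset hwin
    obtain ⟨c, hc, hcw⟩ := List.mem_map.mp hwin2
    by_cases hcw2 : c = w
    · exact hwu (hcw2 ▸ hc)
    · simp [hf, hcw2] at hcw; exact hwy hcw.symm
  -- Step C : each x i occurs exactly once in destutter v
  have hdcnt : ∀ i : Fin r, (v.destutter (· ≠ ·)).count (x i) = 1 := by
    intro i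
    set f : Var → Var := fun c => if c = x i then c else N with hf
    have hfiff : ∀ e, f e = x i ↔ e = x i := by
      intro e
      by_cases he : e = x i <;> simp [hf, he, Ne.symm (hxN i)]
    have hcntX : X.count (x i) = 1 :=
      List.count_eq_one_of_mem hnodupX (List.mem_ofFn.mpr ⟨i, rfl⟩)
    have hcnt : ((u.map f).destutter (· ≠ ·)).count (x i) ≤ 1 := by
      rw [count_destutter_map f _ hfiff, hdu, hcntX]
    have hletters : ∀ c ∈ u.map f, c = x i ∨ c = N := by
      intro c hc
      obtain ⟨e, _, rfl⟩ := List.mem_map.mp hc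
      by_cases he : e = x i
      · left; simp [hf, he]
      · right; simp [hf, he]
    have hht : height (u.map f) ≤ 3 :=
      len_le_three (List.isChain_destutter _ _)
        (fun e he => hletters e ((List.destutter_sublist _ _).subset he)) hcnt
    have hsame : (u.map f).destutter (· ≠ ·) = (v.map f).destutter (· ≠ ·) :=
      hC3 (x i) N (hxN i) (u.map f) (by simp [hune]) hletters hht (v.map f) (SSat_map hsat f)
    calc (v.destutter (· ≠ ·)).count (x i)
        = ((v.map f).destutter (· ≠ ·)).count (x i) := (count_destutter_map f _ hfiff v).symm
      _ = ((u.map f).destutter (· ≠ ·)).count (x i) := by rw [hsame]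
      _ = (u.destutter (· ≠ ·)).count (x i) := count_destutter_map f _ hfiff u
      _ = 1 := by rw [hdu, hcntX]
  -- the destuttered word d
  set d : Word := v.destutter (· ≠ ·) with hd
  have hdsubv : ∀ c ∈ d, c ∈ v := fun c hc => (List.destutter_sublist _ _).subset hc
  have hdperm : d.Perm X := by
    rw [List.perm_iff_count]
    intro a
    by_cases ha : ∃ i, a = x i
    · obtain ⟨i, rfl⟩ := ha
      rw [hdcnt i, List.count_eq_one_of_mem hnodupX (List.mem_ofFn.mpr ⟨i, rfl⟩)]
    · have haX : a ∉ X := fun hh => by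
        rw [hX, List.mem_ofFn] at hh
        obtain ⟨i, hi⟩ := hh
        exact ha ⟨i, hi.symm⟩
      have had : a ∉ d := fun hh => by
        obtain ⟨i, hi⟩ := hvsub a (hdsubv a hh)
        exact ha ⟨i, hi⟩
      rw [List.count_eq_zero_of_not_mem haX, List.count_eq_zero_of_not_mem had]
  have hdlen : d.length = r := by rw [hdperm.length_eq, hXlen]
  have hmemd : ∀ i : Fin r, x i ∈ d := fun i =>
    List.count_pos_iff.mp (by rw [hdcnt i]; omega)
  set J : Fin r → ℕ := fun i => d.idxOf (x i) with hJ
  have hJlt : ∀ i, J i < r := fun i => by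
    have := List.idxOf_lt_length_iff.mpr (hmemd i)
    rwa [hdlen] at this
  have hJget : ∀ i, d[J i]'(by rw [hdlen]; exact hJlt i) = x i := fun i =>
    List.getElem_idxOf _
  have hXidx : ∀ j : Fin r, X.idxOf (x j) = (j : ℕ) := by
    intro j
    have hmem : x j ∈ X := List.mem_ofFn.mpr ⟨j, rfl⟩
    have hlt : X.idxOf (x j) < X.length := List.idxOf_lt_length_iff.mpr hmem
    have hget : X[X.idxOf (x j)]'hlt = x j := List.getElem_idxOf hlt
    have h2 : x ⟨X.idxOf (x j), by rwa [hXlen] at hlt⟩ = x j :=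
      (List.getElem_ofFn hlt).symm.trans hget
    have := hinj h2
    simpa using congrArg Fin.val this
  -- the ordering step
  have hstep : ∀ (i : Fin r) (hi1 : (i : ℕ) + 1 < r), J i < J ⟨(i : ℕ) + 1, hi1⟩ := by
    intro i hi1
    set g : Var → Var := fun c => if X.idxOf c ≤ (i : ℕ) then N else N + 1 with hg
    have hcomp : ∀ j : Fin r, g (x j) = if (j : ℕ) ≤ (i : ℕ) then N else N + 1 := by
      intro j
      rw [hg]
      simp only [hXidx j]
    have hXmap : X.map g =
        List.replicate ((i : ℕ) + 1) N ++ List.replicate (r - 1 - (i : ℕ)) (N + 1) := by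
      rw [hX, List.map_ofFn]
      exact ofFn_threshold _ N (N + 1) (i : ℕ) (fun j => hcomp j) (by omega)
    have hdyz : (u.map g).destutter (· ≠ ·) = [N, N + 1] := by
      rw [destutter_map, hdu, hXmap]
      exact destutter_yz hyz (by omega) (by omega)
    have hht : height (u.map g) ≤ 3 := by
      show ((u.map g).destutter (· ≠ ·)).length ≤ 3
      rw [hdyz]; simp
    have hletters : ∀ c ∈ u.map g, c = N ∨ c = N + 1 := by
      intro c hc
      obtain ⟨e, _, rfl⟩ := List.mem_map.mp hc
      rw [hg]
      by_cases he : X.idxOf e ≤ (i : ℕ)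
      · left; simp [he]
      · right; simp [he]
    have hsame : (u.map g).destutter (· ≠ ·) = (v.map g).destutter (· ≠ ·) :=
      hC3 N (N + 1) hyz (u.map g) (by simp [hune]) hletters hht (v.map g) (SSat_map hsat g)
    have hvyz : ((d.map g).destutter (· ≠ ·)) = [N, N + 1] := by
      rw [hd, ← destutter_map, ← hsame, hdyz]
    have hlettersd : ∀ c ∈ d.map g, c = N ∨ c = N + 1 := by
      intro c hc
      obtain ⟨e, _, rfl⟩ := List.mem_map.mp hc
      rw [hg]
      by_cases he : X.idxOf e ≤ (i : ℕ)
      · left; simp [he]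
      · right; simp [he]
    obtain ⟨a, b, hab⟩ := ordc hyz hlettersd hvyz
    have hlenm : (d.map g).length = r := by rw [List.length_map, hdlen]
    have hyJ : (d.map g)[J i]'(by rw [hlenm]; exact hJlt i) = N := by
      rw [List.getElem_map, hJget i, hcomp i]
      simp
    have hzJ : (d.map g)[J ⟨(i : ℕ) + 1, hi1⟩]'(by rw [hlenm]; exact hJlt _) = N + 1 := by
      rw [List.getElem_map, hJget ⟨(i : ℕ) + 1, hi1⟩, hcomp ⟨(i : ℕ) + 1, hi1⟩]
      simp
    exact y_before_z hyz hab (by rw [hlenm]; exact hJlt i) (by rw [hlenm]; exact hJlt _) hyJ hzJ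
  -- J is the identity
  have hlower : ∀ (k : ℕ) (hk : k < r), k ≤ J ⟨k, hk⟩ := by
    intro k
    induction k with
    | zero => intro hk; exact Nat.zero_le _
    | succ n ih =>
      intro hk
      have h1 := hstep ⟨n, by omega⟩ (by simpa using hk)
      have h2 := ih (by omega)
      simp only [Fin.val_mk] at h1 h2 ⊢
      omega
  have hupper : ∀ (m k : ℕ) (hk : k < r), k + m = r - 1 → J ⟨k, hk⟩ ≤ k := by
    intro m
    induction m with
    | zero =>
      intro k hk hkm
      have := hJlt ⟨k, hk⟩
      omega
    | succ n ih =>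
      intro k hk hkm
      have hk1 : k + 1 < r := by omega
      have h1 := hstep ⟨k, hk⟩ (by simpa using hk1)
      have h2 := ih (k + 1) hk1 (by omega)
      simp only [Fin.val_mk] at h1 h2 ⊢
      omega
  have hJeq : ∀ (k : ℕ) (hk : k < r), J ⟨k, hk⟩ = k := by
    intro k hk
    have h1 := hlower k hk
    have h2 := hupper (r - 1 - k) k hk (by omega)
    omega
  -- conclusion
  have hdX : d = X := by
    apply List.ext_getElem (by rw [hdlen, hXlen])
    intro k hk1 hk2
    have hkr : k < r := by rwa [hdlen] at hk1
    have h1 : d[(J ⟨k, hkr⟩)]? = some (x ⟨k, hkr⟩) := by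
      rw [List.getElem?_eq_getElem (by rw [hdlen]; exact hJlt _)]
      exact congrArg some (hJget ⟨k, hkr⟩)
    rw [hJeq k hkr] at h1
    rw [List.getElem?_eq_getElem hk1] at h1
    have h2 : d[k]'hk1 = x ⟨k, hkr⟩ := Option.some.inj h1
    rw [h2]
    exact (List.getElem_ofFn hk2).symm
  show u.destutter (· ≠ ·) = v.destutter (· ≠ ·)
  rw [hdu, ← hd, hdX]
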